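/- Let d = 7 and let f : (0,∞) → ℝ be a smooth function satisfying f''(y) + ((d-1)/y - y/2) f'(y) - (d-1)/(2y²) sin(2 f(y)) = 0 for all y > 0, and set h(y) = y³ f'(y). Suppose y₀ > 0 is a point with h'(y₀) = 0 and f(y₀) = π/2. Then h''(y₀) = 0, h'''(y₀) = 0, and the fourth derivative satisfies h''''(y₀) = 24 y₀^{-8} h(y₀)³; in particular, if h(y₀) > 0 then h''''(y₀) > 0. -/

import Mathlib

open Real Set Filter Topology

noncomputable def gg1 (f : ℝ → ℝ) (y : ℝ) : ℝ :=
  (y^4/2 - 3*y^2) * deriv f y + 3*y*Real.sin (2*f y)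

noncomputable def gg2 (f : ℝ → ℝ) (y : ℝ) : ℝ :=
  (y^5/4 - 5*y^3/2 + 12*y) * deriv f y + 6*y*Real.cos (2*f y)*deriv f y
    + (3*y^2/2 - 6)*Real.sin (2*f y)

noncomputable def gg3 (f : ℝ → ℝ) (y : ℝ) : ℝ :=
  (y^6/8 - 3*y^4/2 + 27*y^2/2 - 60) * deriv f y
    + (6*y^2 - 42)*Real.cos (2*f y)*deriv f y
    + (3*y^3/4 - 9*y/2 + 36*y⁻¹)*Real.sin (2*f y)
    + 18*y⁻¹*Real.sin (2*f y)*Real.cos (2*f y)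
    - 12*y*Real.sin (2*f y)*(deriv f y)^2

section aux

variable (f : ℝ → ℝ)

lemma diffAt_f (hf : ContDiffOn ℝ (⊤ : ℕ∞) f (Ioi 0)) {y : ℝ} (hy : 0 < y) :
    DifferentiableAt ℝ f y :=
  (hf.differentiableOn (by simp)).differentiableAt (isOpen_Ioi.mem_nhds hy)

lemma diffAt_deriv_f (hf : ContDiffOn ℝ (⊤ : ℕ∞) f (Ioi 0)) {y : ℝ} (hy : 0 < y) :
    DifferentiableAt ℝ (deriv f) y := by
  have h1 : ContDiffOn ℝ (⊤:ℕ∞) (deriv f) (Ioi 0) := hf.deriv_of_isOpen isOpen_Ioi (by simp)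
  exact (h1.differentiableOn (by simp)).differentiableAt (isOpen_Ioi.mem_nhds hy)

lemma hasDerivAt_sin2f (hf : ContDiffOn ℝ (⊤ : ℕ∞) f (Ioi 0)) {y : ℝ} (hy : 0 < y) :
    HasDerivAt (fun z => Real.sin (2*f z)) (Real.cos (2*f y) * (2*deriv f y)) y :=
  ((Real.hasDerivAt_sin (2*f y)).comp y ((diffAt_f f hf hy).hasDerivAt.const_mul 2) :)

lemma hasDerivAt_cos2f (hf : ContDiffOn ℝ (⊤ : ℕ∞) f (Ioi 0)) {y : ℝ} (hy : 0 < y) :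
    HasDerivAt (fun z => Real.cos (2*f z)) (-Real.sin (2*f y) * (2*deriv f y)) y :=
  ((Real.hasDerivAt_cos (2*f y)).comp y ((diffAt_f f hf hy).hasDerivAt.const_mul 2) :)

variable (hf : ContDiffOn ℝ (⊤ : ℕ∞) f (Ioi 0))
  (hode' : ∀ y : ℝ, 0 < y →
    deriv (deriv f) y = (y/2 - 6/y)*deriv f y + 3/y^2*Real.sin (2*f y))

include hf hode'

lemma step1 : ∀ y : ℝ, 0 < y → deriv (fun z => z^3*deriv f z) y = gg1 f y := by
  intro y hy
  have hy0 : y ≠ 0 := hy.ne'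
  have hD := (hasDerivAt_pow 3 y).mul (diffAt_deriv_f f hf hy).hasDerivAt
  simp only [Pi.mul_def, Pi.add_def, Pi.sub_def, Pi.pow_def] at hD
  rw [hD.deriv, hode' y hy]
  simp only [gg1]
  push_cast
  field_simp
  ring

lemma step2 : ∀ y : ℝ, 0 < y → deriv (gg1 f) y = gg2 f y := by
  intro y hy
  have hy0 : y ≠ 0 := hy.ne'
  have hq1 : HasDerivAt (fun z : ℝ => z^4/2 - 3*z^2)
      ((↑4*y^(4-1))/2 - 3*(↑2*y^(2-1))) y :=
    ((hasDerivAt_pow 4 y).div_const 2).sub ((hasDerivAt_pow 2 y).const_mul 3)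
  have h3z : HasDerivAt (fun z : ℝ => 3*z) (3*1) y := (hasDerivAt_id y).const_mul 3
  have hD := (hq1.mul (diffAt_deriv_f f hf hy).hasDerivAt).add (h3z.mul (hasDerivAt_sin2f f hf hy))
  simp only [Pi.mul_def, Pi.add_def, Pi.sub_def, Pi.pow_def] at hD
  rw [show (gg1 f) = (fun z => (z^4/2 - 3*z^2) * deriv f z + 3*z*Real.sin (2*f z)) from rfl,
    hD.deriv, hode' y hy]
  simp only [gg2]
  push_cast
  field_simp
  ring

lemma step3 : ∀ y : ℝ, 0 < y → deriv (gg2 f) y = gg3 f y := by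
  intro y hy
  have hy0 : y ≠ 0 := hy.ne'
  have hp := (diffAt_deriv_f f hf hy).hasDerivAt
  have hq1 : HasDerivAt (fun z : ℝ => z^5/4 - 5*z^3/2 + 12*z)
      ((↑5*y^(5-1))/4 - 5*(↑3*y^(3-1))/2 + 12*1) y :=
    (((hasDerivAt_pow 5 y).div_const 4).sub
      (((hasDerivAt_pow 3 y).const_mul 5).div_const 2)).add ((hasDerivAt_id y).const_mul 12)
  have h6z : HasDerivAt (fun z : ℝ => 6*z) (6*1) y := (hasDerivAt_id y).const_mul 6
  have hq3 : HasDerivAt (fun z : ℝ => 3*z^2/2 - 6) (3*(↑2*y^(2-1))/2 - 0) y :=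
    (((hasDerivAt_pow 2 y).const_mul 3).div_const 2).sub (hasDerivAt_const y 6)
  have hD := ((hq1.mul hp).add (((h6z.mul (hasDerivAt_cos2f f hf hy)).mul hp))).add
    (hq3.mul (hasDerivAt_sin2f f hf hy))
  simp only [Pi.mul_def, Pi.add_def, Pi.sub_def, Pi.pow_def] at hD
  rw [show (gg2 f) = (fun z => (z^5/4 - 5*z^3/2 + 12*z) * deriv f z
      + 6*z*Real.cos (2*f z)*deriv f z + (3*z^2/2 - 6)*Real.sin (2*f z)) from rfl,
    hD.deriv, hode' y hy]
  simp only [gg3]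
  push_cast
  field_simp
  ring

omit hode' in
lemma step4 : ∀ y : ℝ, 0 < y → deriv (gg3 f) y =
    (3*y^5/4 - 6*y^3 + 27*y) * deriv f y
    + (y^6/8 - 3*y^4/2 + 27*y^2/2 - 60) * deriv (deriv f) y
    + (12*y*Real.cos (2*f y) - (6*y^2 - 42)*Real.sin (2*f y)*(2*deriv f y)) * deriv f y
    + (6*y^2 - 42)*Real.cos (2*f y) * deriv (deriv f) y
    + (9*y^2/4 - 9/2 - 36*(y^2)⁻¹)*Real.sin (2*f y)
    + (3*y^3/4 - 9*y/2 + 36*y⁻¹)*Real.cos (2*f y)*(2*deriv f y)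
    + (-18*(y^2)⁻¹*Real.sin (2*f y) + 18*y⁻¹*Real.cos (2*f y)*(2*deriv f y))*Real.cos (2*f y)
    - 18*y⁻¹*Real.sin (2*f y)*Real.sin (2*f y)*(2*deriv f y)
    - (12*Real.sin (2*f y) + 12*y*Real.cos (2*f y)*(2*deriv f y))*(deriv f y)^2
    - 12*y*Real.sin (2*f y)*(2*deriv f y*deriv (deriv f) y) := by
  intro y hy
  have hy0 : y ≠ 0 := hy.ne'
  have hp := (diffAt_deriv_f f hf hy).hasDerivAt
  have hs := hasDerivAt_sin2f f hf hy
  have hc := hasDerivAt_cos2f f hf hy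
  have hq1 : HasDerivAt (fun z : ℝ => z^6/8 - 3*z^4/2 + 27*z^2/2 - 60)
      ((↑6*y^(6-1))/8 - 3*(↑4*y^(4-1))/2 + 27*(↑2*y^(2-1))/2 - 0) y :=
    ((((hasDerivAt_pow 6 y).div_const 8).sub
      (((hasDerivAt_pow 4 y).const_mul 3).div_const 2)).add
      (((hasDerivAt_pow 2 y).const_mul 27).div_const 2)).sub (hasDerivAt_const y 60)
  have hq2 : HasDerivAt (fun z : ℝ => 6*z^2 - 42) (6*(↑2*y^(2-1)) - 0) y :=
    ((hasDerivAt_pow 2 y).const_mul 6).sub (hasDerivAt_const y 42)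
  have hq3 : HasDerivAt (fun z : ℝ => 3*z^3/4 - 9*z/2 + 36*z⁻¹)
      ((3*(↑3*y^(3-1)))/4 - (9*1)/2 + 36*(-(y^2)⁻¹)) y :=
    ((((hasDerivAt_pow 3 y).const_mul 3).div_const 4).sub
      (((hasDerivAt_id y).const_mul 9).div_const 2)).add ((hasDerivAt_inv hy0).const_mul 36)
  have hq4 : HasDerivAt (fun z : ℝ => 18*z⁻¹) (18*(-(y^2)⁻¹)) y :=
    (hasDerivAt_inv hy0).const_mul 18
  have h12z : HasDerivAt (fun z : ℝ => 12*z) (12*1) y := (hasDerivAt_id y).const_mul 12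
  have hD := (((((hq1.mul hp).add ((hq2.mul hc).mul hp)).add
    (hq3.mul hs)).add ((hq4.mul hs).mul hc)).sub (((h12z.mul hs)).mul (hp.pow 2)))
  simp only [Pi.mul_def, Pi.add_def, Pi.sub_def, Pi.pow_def] at hD
  rw [show (gg3 f) = (fun z => (z^6/8 - 3*z^4/2 + 27*z^2/2 - 60) * deriv f z
      + (6*z^2 - 42)*Real.cos (2*f z)*deriv f z
      + (3*z^3/4 - 9*z/2 + 36*z⁻¹)*Real.sin (2*f z)
      + 18*z⁻¹*Real.sin (2*f z)*Real.cos (2*f z)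
      - 12*z*Real.sin (2*f z)*(deriv f z)^2) from rfl, hD.deriv]
  push_cast
  ring

end aux


open Real Set Filter Topology

/-- In dimension `d = 7`, if `f` is a smooth solution of the harmonic map shrinker equation
on `(0,∞)`, `h(y) = y³ f'(y)`, and `y₀ > 0` is a point with `h'(y₀) = 0` and `f(y₀) = π/2`,
then `h''(y₀) = h'''(y₀) = 0` and `h''''(y₀) = 24 y₀⁻⁸ h(y₀)³`; in particular
`h(y₀) > 0` implies `h''''(y₀) > 0`. (Here `d = 7`, so `d - 1 = 6`.) -/
theorem critical_point_fourth_derivative (f : ℝ → ℝ)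
    (hf : ContDiffOn ℝ (⊤ : ℕ∞) f (Ioi 0))
    (hode : ∀ y : ℝ, 0 < y →
      deriv (deriv f) y + ((6 : ℝ) / y - y / 2) * deriv f y
        - (6 : ℝ) / (2 * y ^ 2) * Real.sin (2 * f y) = 0)
    (y₀ : ℝ) (hy₀ : 0 < y₀)
    (hh' : deriv (fun z => z ^ 3 * deriv f z) y₀ = 0)
    (hfy₀ : f y₀ = Real.pi / 2) :
    deriv (deriv (fun z => z ^ 3 * deriv f z)) y₀ = 0 ∧
    deriv (deriv (deriv (fun z => z ^ 3 * deriv f z))) y₀ = 0 ∧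
    deriv (deriv (deriv (deriv (fun z => z ^ 3 * deriv f z)))) y₀ =
      24 / y₀ ^ 8 * (y₀ ^ 3 * deriv f y₀) ^ 3 ∧
    (0 < y₀ ^ 3 * deriv f y₀ →
      0 < deriv (deriv (deriv (deriv (fun z => z ^ 3 * deriv f z)))) y₀) := by
  have hy0 : y₀ ≠ 0 := hy₀.ne'
  have hode' : ∀ y : ℝ, 0 < y →
      deriv (deriv f) y = (y/2 - 6/y)*deriv f y + 3/y^2*Real.sin (2*f y) := by
    intro y hy
    linear_combination hode y hy
  have s0 : Real.sin (2 * f y₀) = 0 := by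
    rw [hfy₀, show 2*(Real.pi/2) = Real.pi by ring, Real.sin_pi]
  have c0 : Real.cos (2 * f y₀) = -1 := by
    rw [hfy₀, show 2*(Real.pi/2) = Real.pi by ring, Real.cos_pi]
  have hS1 := step1 f hf hode'
  have hS2 := step2 f hf hode'
  have hS3 := step3 f hf hode'
  have d2 : ∀ y : ℝ, 0 < y → deriv (deriv (fun z => z ^ 3 * deriv f z)) y = gg2 f y := by
    intro y hy
    have ev : deriv (fun z => z ^ 3 * deriv f z) =ᶠ[𝓝 y] gg1 f :=
      Filter.eventuallyEq_of_mem (isOpen_Ioi.mem_nhds hy) (fun z hz => hS1 z hz)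
    rw [ev.deriv_eq]; exact hS2 y hy
  have d3 : ∀ y : ℝ, 0 < y → deriv (deriv (deriv (fun z => z ^ 3 * deriv f z))) y = gg3 f y := by
    intro y hy
    have ev : deriv (deriv (fun z => z ^ 3 * deriv f z)) =ᶠ[𝓝 y] gg2 f :=
      Filter.eventuallyEq_of_mem (isOpen_Ioi.mem_nhds hy) (fun z hz => d2 z hz)
    rw [ev.deriv_eq]; exact hS3 y hy
  have d4 : deriv (deriv (deriv (deriv (fun z => z ^ 3 * deriv f z)))) y₀ = deriv (gg3 f) y₀ := by
    have ev : deriv (deriv (deriv (fun z => z ^ 3 * deriv f z))) =ᶠ[𝓝 y₀] gg3 f :=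
      Filter.eventuallyEq_of_mem (isOpen_Ioi.mem_nhds hy₀) (fun z hz => d3 z hz)
    exact ev.deriv_eq
  have key : (y₀^2 - 6) * deriv f y₀ = 0 := by
    have h1 : gg1 f y₀ = 0 := by rw [← hS1 y₀ hy₀]; exact hh'
    simp only [gg1] at h1
    rw [s0] at h1
    have h2 : y₀^2/2 * ((y₀^2 - 6) * deriv f y₀) = 0 := by linear_combination h1
    rcases mul_eq_zero.mp h2 with h3 | h3
    · exfalso
      have hp2 : (0:ℝ) < y₀^2/2 := by positivity
      linarith
    · exact h3
  have goal1 : deriv (deriv (fun z => z ^ 3 * deriv f z)) y₀ = 0 := by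
    rw [d2 y₀ hy₀]
    simp only [gg2]
    rw [s0, c0]
    linear_combination ((y₀^3 - 4*y₀)/4) * key
  have goal2 : deriv (deriv (deriv (fun z => z ^ 3 * deriv f z))) y₀ = 0 := by
    rw [d3 y₀ hy₀]
    simp only [gg3]
    rw [s0, c0]
    linear_combination (y₀^4/8 - 3*y₀^2/4 + 3) * key
  have goal3 : deriv (deriv (deriv (deriv (fun z => z ^ 3 * deriv f z)))) y₀ =
      24 / y₀ ^ 8 * (y₀ ^ 3 * deriv f y₀) ^ 3 := by
    rw [d4, step4 f hf y₀ hy₀, hode' y₀ hy₀, s0, c0]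
    have hu : y₀ * y₀⁻¹ = 1 := mul_inv_cancel₀ hy0
    have hrhs : 24 / y₀ ^ 8 * (y₀ ^ 3 * deriv f y₀) ^ 3 = 24*y₀*(deriv f y₀)^3 := by
      field_simp
    rw [hrhs]
    linear_combination (y₀⁻¹*(y₀^6/16 - 3*y₀^4/8 + 3*y₀^2 - 12)) * key
      - ((y₀^7/16 - 15*y₀^3/4 + 15*y₀)*deriv f y₀) * hu
  refine ⟨goal1, goal2, goal3, ?_⟩
  intro hpos
  rw [goal3]
  exact mul_pos (div_pos (by norm_num) (pow_pos hy₀ 8)) (pow_pos hpos 3)
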